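/- For any initial covector λ₀ = (u₀, v₀, w₀) with w₀ ≠ 0, the curve γ(t) = (x(t), y(t), z(t)) with x(t) = (v₀(cosh(w₀t) - 1) - u₀ sinh(w₀t))/w₀, y(t) = (v₀ sinh(w₀t) - u₀(cosh(w₀t) - 1))/w₀, z(t) = (u₀² - v₀²)(sinh(w₀t) - w₀t)/(2w₀²), together with h_X(t) = u₀ cosh(w₀t) - v₀ sinh(w₀t), h_Y(t) = v₀ cosh(w₀t) - u₀ sinh(w₀t), h_Z(t) = w₀, solves the Hamiltonian system ḣ_X = -h_Y h_Z, ḣ_Y = -h_X h_Z, ḣ_Z = 0, γ̇ = -h_X X(γ) + h_Y Y(γ), with γ(0) = (0,0,0) and (h_X, h_Y, h_Z)(0) = (u₀, v₀, w₀). -/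

import Mathlib

/-- X = ∂_x - (y/2)∂_z as a vector field on ℝ³. -/
noncomputable def Xvf (p : ℝ × ℝ × ℝ) : ℝ × ℝ × ℝ := (1, 0, -p.2.1 / 2)

/-- Y = ∂_y + (x/2)∂_z as a vector field on ℝ³. -/
noncomputable def Yvf (p : ℝ × ℝ × ℝ) : ℝ × ℝ × ℝ := (0, 1, p.1 / 2)

/-- h_X(t) = u₀ cosh(w₀ t) - v₀ sinh(w₀ t). -/
noncomputable def hXc (u₀ v₀ w₀ t : ℝ) : ℝ := u₀ * Real.cosh (w₀ * t) - v₀ * Real.sinh (w₀ * t)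

/-- h_Y(t) = v₀ cosh(w₀ t) - u₀ sinh(w₀ t). -/
noncomputable def hYc (u₀ v₀ w₀ t : ℝ) : ℝ := v₀ * Real.cosh (w₀ * t) - u₀ * Real.sinh (w₀ * t)

/-- h_Z(t) = w₀. -/
noncomputable def hZc (_u₀ _v₀ w₀ _t : ℝ) : ℝ := w₀

/-- The normal geodesic from the origin with initial covector (u₀, v₀, w₀), w₀ ≠ 0. -/
noncomputable def gam (u₀ v₀ w₀ t : ℝ) : ℝ × ℝ × ℝ :=
  ((v₀ * (Real.cosh (w₀ * t) - 1) - u₀ * Real.sinh (w₀ * t)) / w₀,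
   (v₀ * Real.sinh (w₀ * t) - u₀ * (Real.cosh (w₀ * t) - 1)) / w₀,
   (u₀ ^ 2 - v₀ ^ 2) * (Real.sinh (w₀ * t) - w₀ * t) / (2 * w₀ ^ 2))

theorem geodesic_solves_hamiltonian_system (u₀ v₀ w₀ : ℝ) (hw : w₀ ≠ 0) :
    (∀ t, HasDerivAt (hXc u₀ v₀ w₀) (-(hYc u₀ v₀ w₀ t * hZc u₀ v₀ w₀ t)) t) ∧
    (∀ t, HasDerivAt (hYc u₀ v₀ w₀) (-(hXc u₀ v₀ w₀ t * hZc u₀ v₀ w₀ t)) t) ∧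
    (∀ t, HasDerivAt (hZc u₀ v₀ w₀) 0 t) ∧
    (∀ t, HasDerivAt (gam u₀ v₀ w₀)
      ((-(hXc u₀ v₀ w₀ t)) • Xvf (gam u₀ v₀ w₀ t) + (hYc u₀ v₀ w₀ t) • Yvf (gam u₀ v₀ w₀ t)) t) ∧
    gam u₀ v₀ w₀ 0 = ((0 : ℝ), (0 : ℝ), (0 : ℝ)) ∧
    hXc u₀ v₀ w₀ 0 = u₀ ∧ hYc u₀ v₀ w₀ 0 = v₀ ∧ hZc u₀ v₀ w₀ 0 = w₀ := by
  have hl : ∀ t : ℝ, HasDerivAt (fun t : ℝ => w₀ * t) w₀ t := by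
    intro t; simpa using (hasDerivAt_id t).const_mul w₀
  have hc : ∀ t : ℝ, HasDerivAt (fun t : ℝ => Real.cosh (w₀ * t)) (w₀ * Real.sinh (w₀ * t)) t := by
    intro t; exact ((Real.hasDerivAt_cosh (w₀ * t)).comp t (hl t)).congr_deriv (mul_comm _ _)
  have hs : ∀ t : ℝ, HasDerivAt (fun t : ℝ => Real.sinh (w₀ * t)) (w₀ * Real.cosh (w₀ * t)) t := by
    intro t; exact ((Real.hasDerivAt_sinh (w₀ * t)).comp t (hl t)).congr_deriv (mul_comm _ _)
  refine ⟨?_, ?_, ?_, ?_, ?_, ?_, ?_, ?_⟩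
  · intro t
    have : HasDerivAt (hXc u₀ v₀ w₀) _ t := ((hc t).const_mul u₀).sub ((hs t).const_mul v₀)
    convert this using 1
    simp only [hYc, hZc]; ring
  · intro t
    have : HasDerivAt (hYc u₀ v₀ w₀) _ t := ((hc t).const_mul v₀).sub ((hs t).const_mul u₀)
    convert this using 1
    simp only [hXc, hZc]; ring
  · intro t
    exact hasDerivAt_const t w₀
  · intro t
    have hx : HasDerivAt (fun t : ℝ => (v₀ * (Real.cosh (w₀ * t) - 1) - u₀ * Real.sinh (w₀ * t)) / w₀)
        ((v₀ * (w₀ * Real.sinh (w₀ * t)) - u₀ * (w₀ * Real.cosh (w₀ * t))) / w₀) t :=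
      ((((hc t).sub_const 1).const_mul v₀).sub ((hs t).const_mul u₀)).div_const w₀
    have hy : HasDerivAt (fun t : ℝ => (v₀ * Real.sinh (w₀ * t) - u₀ * (Real.cosh (w₀ * t) - 1)) / w₀)
        ((v₀ * (w₀ * Real.cosh (w₀ * t)) - u₀ * (w₀ * Real.sinh (w₀ * t))) / w₀) t :=
      (((hs t).const_mul v₀).sub (((hc t).sub_const 1).const_mul u₀)).div_const w₀
    have hz : HasDerivAt (fun t : ℝ => (u₀ ^ 2 - v₀ ^ 2) * (Real.sinh (w₀ * t) - w₀ * t) / (2 * w₀ ^ 2))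
        ((u₀ ^ 2 - v₀ ^ 2) * (w₀ * Real.cosh (w₀ * t) - w₀) / (2 * w₀ ^ 2)) t :=
      ((((hs t).sub (hl t)).const_mul (u₀ ^ 2 - v₀ ^ 2))).div_const (2 * w₀ ^ 2)
    have h : HasDerivAt (gam u₀ v₀ w₀) _ t := hx.prodMk (hy.prodMk hz)
    convert h using 1
    have hid : Real.cosh (w₀ * t) ^ 2 - Real.sinh (w₀ * t) ^ 2 = 1 :=
      Real.cosh_sq_sub_sinh_sq (w₀ * t)
    simp only [gam, Xvf, Yvf, hXc, hYc, Prod.smul_mk, Prod.mk_add_mk, smul_eq_mul, Prod.mk.injEq]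
    refine ⟨?_, ?_, ?_⟩
    · field_simp; ring
    · field_simp; ring
    · field_simp
      linear_combination (v₀ ^ 2 - u₀ ^ 2) * hid
  · simp [gam]
  · simp [hXc]
  · simp [hYc]
  · simp [hZc]
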